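/- For the golden mean rotation T_γ(x) = x + 1/γ (mod 1) with γ = (1+√5)/2, coding points of the circle by 0 if they lie in the arc [0, 1/γ) and by 1 if they lie in [1/γ, 1), the itinerary of the point 2/γ (mod 1) equals the fixed point ρ of the Fibonacci substitution. -/

import Mathlib

/-- Fibonacci substitution on finite words: H(0)=01, H(1)=0 (0 ↦ `false`, 1 ↦ `true`). -/
def Hword : List Bool → List Bool
  | [] => []
  | false :: t => false :: true :: Hword t
  | true :: t => false :: Hword t

/-- Paper-indexed Fibonacci numbers, shifted by 2: `fibP k = F_{k-2}`, so
`fibP 0 = F_{-2} = 1`, `fibP 1 = F_{-1} = 0`, `fibP 2 = F_0 = 1`, `fibP 3 = F_1 = 1`, … -/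
def fibP : ℕ → ℕ
  | 0 => 1
  | 1 => 0
  | n + 2 => fibP (n + 1) + fibP n

/-- Fibonacci substitution on infinite binary sequences. -/
def Hseq (x : ℕ → Bool) : ℕ → Bool :=
  fun n => (Hword ((List.range (n + 1)).map x)).getD n false

/-- The left shift on infinite binary sequences. -/
def shift (x : ℕ → Bool) : ℕ → Bool := fun n => x (n + 1)

/-! ### Auxiliary development -/

noncomputable section ItinAux

/-- `bgm = 1/γ = (√5 - 1)/2`. -/
def bgm : ℝ := (Real.sqrt 5 - 1) / 2

lemma sqrt5_sq : Real.sqrt 5 ^ 2 = 5 := Real.sq_sqrt (by norm_num)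

lemma sqrt5_nonneg : 0 ≤ Real.sqrt 5 := Real.sqrt_nonneg 5

lemma sqrt5_lt : Real.sqrt 5 < 3 := by nlinarith [sqrt5_sq, sqrt5_nonneg]

lemma sqrt5_gt : 2 < Real.sqrt 5 := by nlinarith [sqrt5_sq, sqrt5_nonneg]

lemma bgm_pos : 0 < bgm := by unfold bgm; nlinarith [sqrt5_gt]

lemma bgm_lt_one : bgm < 1 := by unfold bgm; nlinarith [sqrt5_lt]

lemma bgm_sq : bgm * bgm = 1 - bgm := by unfold bgm; nlinarith [sqrt5_sq]

lemma bgm_irr : Irrational bgm := by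
  have h5 : Irrational (Real.sqrt 5) := (by norm_num : Nat.Prime 5).irrational_sqrt
  have h1 : Irrational (Real.sqrt 5 - 1) := by simpa using h5.sub_intCast 1
  have h2 : Irrational ((Real.sqrt 5 - 1) / 2) := by
    simpa using h1.div_natCast (by norm_num : (2:ℕ) ≠ 0)
  exact h2

lemma irr1 (k : ℕ) : Irrational (((k : ℝ) + 1) * bgm) := by
  have h := bgm_irr.natCast_mul (show k + 1 ≠ 0 by omega)
  have he : ((k : ℝ) + 1) = ((k + 1 : ℕ) : ℝ) := by push_cast; ring
  rw [he]; exact h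

lemma irr2 (k : ℕ) : Irrational (((k : ℝ) + 2) * bgm) := by
  have h := bgm_irr.natCast_mul (show k + 2 ≠ 0 by omega)
  have he : ((k : ℝ) + 2) = ((k + 2 : ℕ) : ℝ) := by push_cast; ring
  rw [he]; exact h

lemma fract1_pos (k : ℕ) : 0 < Int.fract (((k : ℝ) + 1) * bgm) := by
  rw [Int.fract_pos]
  exact (irr1 k).ne_int _

/-- The candidate itinerary sequence. -/
def aseq (n : ℕ) : Bool := decide (bgm ≤ Int.fract (((n : ℝ) + 2) * bgm))

lemma aseq_false_iff (n : ℕ) :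
    aseq n = false ↔ Int.fract (((n : ℝ) + 2) * bgm) < bgm := by
  simp [aseq]

lemma aseq_true_iff (n : ℕ) :
    aseq n = true ↔ bgm ≤ Int.fract (((n : ℝ) + 2) * bgm) := by
  simp [aseq]

lemma aseq0 : aseq 0 = false := by
  rw [aseq_false_iff]
  have he : (((0:ℕ) : ℝ) + 2) * bgm = ((1 : ℤ) : ℝ) + (2 * bgm - 1) := by push_cast; ring
  rw [he, Int.fract_intCast_add, Int.fract_eq_self.mpr ⟨by unfold bgm; nlinarith [sqrt5_gt],
    by unfold bgm; nlinarith [sqrt5_lt]⟩]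
  unfold bgm; nlinarith [sqrt5_lt]

lemma floor_mono_step (k : ℕ) :
    ⌊((k : ℝ) + 1) * bgm⌋ ≤ ⌊((k : ℝ) + 2) * bgm⌋ :=
  Int.floor_le_floor (by nlinarith [bgm_pos])

lemma floor_ub_step (k : ℕ) :
    ⌊((k : ℝ) + 2) * bgm⌋ ≤ ⌊((k : ℝ) + 1) * bgm⌋ + 1 := by
  have h1 : ((k : ℝ) + 2) * bgm < (((⌊((k : ℝ) + 1) * bgm⌋ + 2 : ℤ)) : ℝ) := by
    have := Int.lt_floor_add_one (((k : ℝ) + 1) * bgm)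
    push_cast
    nlinarith [bgm_lt_one, bgm_pos]
  have := Int.floor_lt.mpr h1
  omega

lemma floor_step_iff (k : ℕ) :
    aseq k = false ↔ ⌊((k : ℝ) + 1) * bgm⌋ < ⌊((k : ℝ) + 2) * bgm⌋ := by
  rw [aseq_false_iff, Int.floor_lt]
  have hfl := Int.floor_add_fract (((k : ℝ) + 2) * bgm)
  have hx : ((k : ℝ) + 2) * bgm = ((k : ℝ) + 1) * bgm + bgm := by ring
  constructor
  · intro h; linarith [hfl, h]
  · intro h
    have := Int.fract_nonneg (((k : ℝ) + 2) * bgm)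
    linarith [hfl, h]

lemma floor_step_false (k : ℕ) (h : aseq k = false) :
    ⌊((k : ℝ) + 2) * bgm⌋ = ⌊((k : ℝ) + 1) * bgm⌋ + 1 := by
  have h1 := (floor_step_iff k).mp h
  have h2 := floor_ub_step k
  omega

lemma floor_step_true (k : ℕ) (h : aseq k = true) :
    ⌊((k : ℝ) + 2) * bgm⌋ = ⌊((k : ℝ) + 1) * bgm⌋ := by
  have h1 : ¬ (⌊((k : ℝ) + 1) * bgm⌋ < ⌊((k : ℝ) + 2) * bgm⌋) := by
    intro hc
    have := (floor_step_iff k).mpr hc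
    rw [h] at this
    exact Bool.noConfusion this
  have h2 := floor_mono_step k
  omega

lemma Hword_append (u v : List Bool) : Hword (u ++ v) = Hword u ++ Hword v := by
  induction u with
  | nil => simp [Hword]
  | cons a t ih => cases a <;> simp [Hword, ih]

/-- Position where the image of letter `k` starts. -/
def Sfn (k : ℕ) : ℕ := (Hword ((List.range k).map aseq)).length

lemma Sfn_zero : Sfn 0 = 0 := rfl

lemma Sfn_succ (k : ℕ) : Sfn (k + 1) = Sfn k + (Hword [aseq k]).length := by
  unfold Sfn
  rw [List.range_succ, List.map_append, Hword_append, List.length_append]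
  rfl

lemma Sfn_one : Sfn 1 = 2 := by
  have h := Sfn_succ 0
  rw [Sfn_zero, aseq0] at h
  simpa [Hword] using h

lemma Sfn_lt (k : ℕ) : Sfn k < Sfn (k + 1) := by
  rw [Sfn_succ]
  cases aseq k <;> simp [Hword]

/-- Formula for `Sfn`. -/
lemma Sfn_eq (k : ℕ) : (Sfn k : ℤ) = k + ⌊((k : ℝ) + 1) * bgm⌋ := by
  induction k with
  | zero =>
    have h1 : (((0:ℕ) : ℝ) + 1) * bgm = bgm := by push_cast; ring
    have h0 : ⌊bgm⌋ = 0 := Int.floor_eq_zero_iff.mpr ⟨bgm_pos.le, bgm_lt_one⟩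
    rw [Sfn_zero, h1, h0]
    simp
  | succ k ih =>
    have hs := Sfn_succ k
    have harg : (((k + 1 : ℕ) : ℝ) + 1) = ((k : ℝ) + 2) := by push_cast; ring
    rw [harg]
    cases h : aseq k with
    | false =>
      have hf := floor_step_false k h
      have hlen : (Hword [aseq k]).length = 2 := by rw [h]; rfl
      rw [hlen] at hs
      rw [hs, hf]
      push_cast
      linarith [ih]
    | true =>
      have hf := floor_step_true k h
      have hlen : (Hword [aseq k]).length = 1 := by rw [h]; rfl
      rw [hlen] at hs
      rw [hs, hf]
      push_cast
      linarith [ih]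

lemma Sfn_real (k : ℕ) : ((Sfn k : ℕ) : ℝ) = (k : ℝ) + ((⌊((k : ℝ) + 1) * bgm⌋ : ℤ) : ℝ) := by
  exact_mod_cast Sfn_eq k

lemma aseq_Sfn (k : ℕ) : aseq (Sfn k) = false := by
  rw [aseq_false_iff]
  have hfl := Int.floor_add_fract (((k : ℝ) + 1) * bgm)
  have hf0 : 0 < Int.fract (((k : ℝ) + 1) * bgm) := fract1_pos k
  have hf1 : Int.fract (((k : ℝ) + 1) * bgm) < 1 := Int.fract_lt_one _
  have hform : (((Sfn k : ℕ) : ℝ) + 2) * bgm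
      = ((k + 1 : ℤ) : ℝ) + bgm * (1 - Int.fract (((k : ℝ) + 1) * bgm)) := by
    rw [Sfn_real]
    push_cast
    linear_combination bgm * hfl + ((k : ℝ) + 1) * bgm_sq
  rw [hform, Int.fract_intCast_add, Int.fract_eq_self.mpr
    ⟨by nlinarith [bgm_pos], by nlinarith [bgm_pos, bgm_lt_one]⟩]
  nlinarith [bgm_pos]

lemma aseq_Sfn1 (k : ℕ) (h : aseq k = false) : aseq (Sfn k + 1) = true := by
  rw [aseq_true_iff]
  have hfl := Int.floor_add_fract (((k : ℝ) + 1) * bgm)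
  have hf0 : 0 < Int.fract (((k : ℝ) + 1) * bgm) := fract1_pos k
  have hf1 : Int.fract (((k : ℝ) + 1) * bgm) < 1 := Int.fract_lt_one _
  -- derive `1 - bgm < fract ((k+1) bgm)` from `aseq k = false`
  have hgt : 1 - bgm < Int.fract (((k : ℝ) + 1) * bgm) := by
    rw [aseq_false_iff] at h
    have he : ((k : ℝ) + 2) * bgm
        = ((⌊((k : ℝ) + 1) * bgm⌋ : ℤ) : ℝ) + (Int.fract (((k : ℝ) + 1) * bgm) + bgm) := by
      linear_combination -hfl
    rw [he, Int.fract_intCast_add] at h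
    by_contra hc
    push_neg at hc
    rcases lt_or_eq_of_le (by linarith : Int.fract (((k : ℝ) + 1) * bgm) + bgm ≤ 1)
      with hlt | heq
    · rw [Int.fract_eq_self.mpr ⟨by linarith [Int.fract_nonneg (((k : ℝ) + 1) * bgm), bgm_pos], hlt⟩] at h
      linarith
    · have hint : ((k : ℝ) + 2) * bgm = ((⌊((k : ℝ) + 1) * bgm⌋ + 1 : ℤ) : ℝ) := by
        rw [he, heq]
        push_cast
        ring
      exact (irr2 k).ne_int _ hint
  have hform : (((Sfn k + 1 : ℕ) : ℝ) + 2) * bgm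
      = ((k + 1 : ℤ) : ℝ) + bgm * (2 - Int.fract (((k : ℝ) + 1) * bgm)) := by
    push_cast [Sfn_real]
    linear_combination bgm * hfl + ((k : ℝ) + 1) * bgm_sq
  rw [hform, Int.fract_intCast_add, Int.fract_eq_self.mpr
    ⟨by nlinarith [bgm_pos], by nlinarith [bgm_pos, bgm_sq]⟩]
  nlinarith [bgm_pos]

lemma Sfn_ge (k : ℕ) : k + 2 ≤ Sfn (k + 1) := by
  induction k with
  | zero => rw [Sfn_one]
  | succ k ih => have := Sfn_lt (k + 1); omega

lemma exists_tile (n : ℕ) : ∃ k, Sfn k ≤ n ∧ n < Sfn (k + 1) := by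
  induction n with
  | zero =>
    refine ⟨0, by rw [Sfn_zero], ?_⟩
    rw [Sfn_one]; omega
  | succ n ih =>
    obtain ⟨k, h1, h2⟩ := ih
    by_cases hc : n + 1 < Sfn (k + 1)
    · exact ⟨k, by omega, hc⟩
    · exact ⟨k + 1, by omega, by have := Sfn_lt (k + 1); omega⟩

lemma rho_eq_aseq (ρ : ℕ → Bool) (hρ : Hseq ρ = ρ) (n : ℕ) : ρ n = aseq n := by
  induction n using Nat.strong_induction_on with
  | _ n ih =>
  have hn : ρ n = (Hword ((List.range (n + 1)).map ρ)).getD n false :=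
    (congrFun hρ n).symm
  rcases Nat.eq_zero_or_pos n with h0 | hpos
  · subst h0
    rw [hn, aseq0]
    have hr1 : List.range 1 = [0] := rfl
    rw [hr1]
    cases hb : ρ 0 <;> simp [Hword, hb]
  · obtain ⟨k, hk1, hk2⟩ := exists_tile n
    have hkn : k < n := by
      rcases Nat.eq_zero_or_pos k with rfl | hk
      · omega
      · have hk' : k - 1 + 1 = k := by omega
        have h2 := Sfn_ge (k - 1)
        rw [hk'] at h2
        omega
    have hpre : (List.range (k + 1)).map ρ = (List.range (k + 1)).map aseq :=
      List.map_congr_left (fun j hj => ih j (by have := List.mem_range.mp hj; omega))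
    obtain ⟨t, ht⟩ : ∃ t, (List.range (n + 1)).map ρ = (List.range (k + 1)).map aseq ++ t := by
      refine ⟨(List.map (fun x => (k + 1) + x) (List.range (n - k))).map ρ, ?_⟩
      rw [show n + 1 = (k + 1) + (n - k) by omega, List.range_add, List.map_append, hpre]
    rw [hn, ht, Hword_append]
    have hlen1 : (Hword ((List.range (k + 1)).map aseq)).length = Sfn (k + 1) := rfl
    rw [List.getD_append _ _ _ _ (by rw [hlen1]; exact hk2)]
    have hsp : (List.range (k + 1)).map aseq = (List.range k).map aseq ++ [aseq k] := by
      rw [List.range_succ, List.map_append]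
      rfl
    rw [hsp, Hword_append]
    rw [List.getD_append_right _ _ _ _ (show (Hword ((List.range k).map aseq)).length ≤ n from hk1)]
    have hdd : n - (Hword ((List.range k).map aseq)).length = n - Sfn k := rfl
    rw [hdd]
    have hstep := Sfn_succ k
    cases hak : aseq k with
    | true =>
      have hl : (Hword [aseq k]).length = 1 := by rw [hak]; rfl
      have hnS : n = Sfn k := by omega
      have hz : n - Sfn k = 0 := by omega
      rw [hz, hnS, aseq_Sfn k]
      rfl
    | false =>
      have hl : (Hword [aseq k]).length = 2 := by rw [hak]; rfl
      rcases (show n - Sfn k = 0 ∨ n - Sfn k = 1 by omega) with hz | ho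
      · have hnS : n = Sfn k := by omega
        rw [hz, hnS, aseq_Sfn k]
        rfl
      · have hnS : n = Sfn k + 1 := by omega
        rw [ho, hnS, aseq_Sfn1 k hak]
        rfl

end ItinAux

/-- the itinerary of the point `2/γ (mod 1)` under the rotation by `γ`
with coding `0` on `[0, 1/γ)` and `1` on `[1/γ, 1)` is the fixed point `ρ` of the
Fibonacci substitution. -/
theorem itinerary_is_rho (γ : ℝ) (hγ : γ = (1 + Real.sqrt 5) / 2)
    (ρ : ℕ → Bool) (hρ : Hseq ρ = ρ) (n : ℕ) :
    ρ n = false ↔ Int.fract (2 * γ⁻¹ + n * γ) < γ⁻¹ := by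
  have hb : γ⁻¹ = bgm := by
    have hmul : γ * bgm = 1 := by
      rw [hγ]; unfold bgm
      linear_combination (1 / 4 : ℝ) * sqrt5_sq
    field_simp [show γ ≠ 0 by rw [hγ]; nlinarith [sqrt5_gt]]
    linarith [hmul]
  have hγb : γ = 1 + bgm := by rw [hγ]; unfold bgm; ring
  have hfr : Int.fract (2 * γ⁻¹ + n * γ) = Int.fract (((n : ℝ) + 2) * bgm) := by
    rw [hb, hγb]
    have he : 2 * bgm + (n : ℝ) * (1 + bgm) = ((n : ℝ) + 2) * bgm + (n : ℕ) := by
      ring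
    rw [he, Int.fract_add_natCast]
  rw [hfr, hb, rho_eq_aseq ρ hρ n, aseq_false_iff]
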